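/- (Initial scale estimate) Fix p > 2d. There exist a' > 0, δ > 0 (depending only on d and p), C > 0, and γ₀ such that for all γ > γ₀ the following holds with L̃₀ = γ^δ and Λ = ([−L̃₀, L̃₀]^d ∩ ℤ^d) + i, i ∈ ℤ^d: for any finite set S ⊂ [−2d−γ, 2d+γ] containing at most C·γ elements, with probability at least 1 − C·L̃₀^{−p}, for every E ∈ S and every j ∈ ∂Λ, E − H_Λ is invertible and |(E − H_Λ)⁻¹(i, j)| ≤ e^{−a'(log γ)|i−j|}. -/

import Mathlib

open MeasureTheory Finset
open scoped NNReal ENNReal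

noncomputable section

/-- Sites of the lattice `ℤ^d`. -/
abbrev Site (d : ℕ) := Fin d → ℤ

/-- The `ℓ¹`-norm `|i|` of a lattice site. -/
def l1 {d : ℕ} (i : Site d) : ℕ := ∑ k, (i k).natAbs

/-- The `k`-th unit coordinate vector in `ℤ^d`. -/
def unitVec {d : ℕ} (k : Fin d) : Site d := fun l => if l = k then 1 else 0

/-- `P` is the product measure `∏_{j ∈ ℤ^d} g(dv_j)` on `Ω = ℝ^{ℤ^d}`: it is a probability
measure whose finite-dimensional cylinder marginals are products of copies of `g`. -/
def IsProductMeasure {d : ℕ} (g : Measure ℝ) (P : Measure (Site d → ℝ)) : Prop :=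
  IsProbabilityMeasure P ∧
    ∀ (s : Finset (Site d)) (A : Site d → Set ℝ), (∀ j, MeasurableSet (A j)) →
      P {v | ∀ j ∈ s, v j ∈ A j} = ∏ j ∈ s, g (A j)

/-- The single-site distribution `g` is a probability measure supported in `[-1,1]`,
absolutely continuous with a bounded density. -/
def NiceDisorder (g : Measure ℝ) : Prop :=
  IsProbabilityMeasure g ∧ g (Set.Icc (-1 : ℝ) 1)ᶜ = 0 ∧
    ∃ C : ℝ≥0, ∀ A : Set ℝ, g A ≤ (C : ℝ≥0∞) * volume A

/-- The finite-volume Anderson Hamiltonian `H_Λ = Δ_Λ + γ V` as a matrix on `ℓ²(Λ)`: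
`H_Λ(i,j) = 1` if `|i-j|_{ℓ¹} = 1` (both in `Λ`), plus the diagonal `γ v_i`. -/
def HMat {d : ℕ} (γ : ℝ) (v : Site d → ℝ) (Λ : Finset (Site d)) : Matrix Λ Λ ℂ :=
  fun i j => (if l1 (i.1 - j.1) = 1 then 1 else 0) +
    (if i = j then ((γ * v i.1 : ℝ) : ℂ) else 0)

/-- The cube `([-L, L]^d ∩ ℤ^d) + i` centered at `i`. -/
def cube {d : ℕ} (L : ℝ) (i : Site d) : Finset (Site d) :=
  (Fintype.piFinset fun _ => Finset.Icc (-⌊L⌋) ⌊L⌋).image (· + i)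

/-- `j` is a boundary site of `Λ`: it lies in `Λ` and has a nearest neighbor outside `Λ`. -/
def IsBoundary {d : ℕ} (Λ : Finset (Site d)) (j : Site d) : Prop :=
  j ∈ Λ ∧ ∃ j', l1 (j - j') = 1 ∧ j' ∉ Λ

/-- The localization event for the finite-volume Hamiltonian `H_Λ` centered at `i`:
for every energy `E ∈ S` and every boundary site `j` of `Λ`, the matrix `E - H_Λ` is
invertible and the Green's function decays as
`|(E - H_Λ)⁻¹(i,j)| ≤ C·e^{-a(log γ)|i-j|}`. -/
def LocEvent {d : ℕ} (γ a C : ℝ) (Λ : Finset (Site d)) (i : Site d)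
    (S : Finset ℝ) : Set (Site d → ℝ) :=
  {v | ∀ E ∈ S, ∀ j, IsBoundary Λ j →
    IsUnit ((E : ℂ) • (1 : Matrix Λ Λ ℂ) - HMat γ v Λ) ∧
    ∀ (hi : i ∈ Λ) (hj : j ∈ Λ),
      ‖(((E : ℂ) • (1 : Matrix Λ Λ ℂ) - HMat γ v Λ)⁻¹) ⟨i, hi⟩ ⟨j, hj⟩‖ ≤
        C * Real.exp (-(a * Real.log γ) * (l1 (i - j) : ℝ))}

namespace ISE

variable {d : ℕ}

lemma l1_neg (x : Site d) : l1 (-x) = l1 x := by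
  unfold l1; simp

lemma l1_sub_comm (x y : Site d) : l1 (x - y) = l1 (y - x) := by
  rw [← l1_neg (y - x), neg_sub]

lemma l1_self (x : Site d) : l1 (x - x) = 0 := by
  unfold l1; simp

lemma l1_triangle3 (x y z : Site d) : l1 (x - z) ≤ l1 (x - y) + l1 (y - z) := by
  unfold l1
  rw [← Finset.sum_add_distrib]
  apply Finset.sum_le_sum
  intro k _
  have : (x - z) k = (x - y) k + (y - z) k := by
    simp only [Pi.sub_apply]; ring
  rw [this]
  exact Int.natAbs_add_le _ _

lemma eq_unit_of_l1_eq_one {w : Site d} (h : l1 w = 1) :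
    ∃ k, w = unitVec k ∨ w = -unitVec k := by
  unfold l1 at h
  have hne : ∑ k, (w k).natAbs ≠ 0 := by omega
  obtain ⟨k, -, hk⟩ := Finset.exists_ne_zero_of_sum_ne_zero hne
  have hle : (w k).natAbs ≤ 1 := by
    rw [← h]
    exact Finset.single_le_sum (f := fun k => (w k).natAbs) (fun _ _ => Nat.zero_le _) (Finset.mem_univ k)
  have hk1 : (w k).natAbs = 1 := by omega
  have hrest : ∀ j, j ≠ k → w j = 0 := by
    intro j hj
    have hsum : ∑ m ∈ Finset.univ.erase k, (w m).natAbs = 0 := by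
      have h2 : (w k).natAbs + ∑ m ∈ Finset.univ.erase k, (w m).natAbs = 1 := by
        rw [Finset.add_sum_erase _ (fun m => (w m).natAbs) (Finset.mem_univ k)]
        exact h
      omega
    have := (Finset.sum_eq_zero_iff.mp hsum) j (Finset.mem_erase.mpr ⟨hj, Finset.mem_univ j⟩)
    exact Int.natAbs_eq_zero.mp this
  refine ⟨k, ?_⟩
  rcases Int.natAbs_eq_iff.mp hk1 with h1 | h1
  · left; funext j
    by_cases hj : j = k
    · subst hj; simpa [unitVec] using h1
    · simp [unitVec, hj, hrest j hj]
  · right; funext j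
    by_cases hj : j = k
    · subst hj; simpa [unitVec] using h1
    · simp [unitVec, hj, hrest j hj]

/-- neighbor counting -/
lemma nbr_card_le (Λ : Finset (Site d)) (x : Site d) :
    ((Finset.univ : Finset {a // a ∈ Λ}).filter fun z => l1 (x - z.1) = 1).card ≤ 2 * d := by
  classical
  have h := Finset.card_le_card_of_injOn
    (s := (Finset.univ : Finset {a // a ∈ Λ}).filter fun z => l1 (x - z.1) = 1)
    (t := (Finset.univ : Finset (Fin d × Bool)).image fun q => if q.2 then unitVec q.1 else -unitVec q.1)
    (fun z : {a // a ∈ Λ} => x - z.1)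
    (by
      intro z hz
      obtain ⟨k, hk | hk⟩ := eq_unit_of_l1_eq_one (Finset.mem_filter.mp hz).2
      · exact Finset.mem_image.mpr ⟨(k, true), Finset.mem_univ _, by simp [hk.symm]⟩
      · exact Finset.mem_image.mpr ⟨(k, false), Finset.mem_univ _, by simp [hk.symm]⟩)
    (by
      intro a _ b _ hab
      simp only at hab
      exact Subtype.ext (by have := sub_right_injective hab; exact this))
  calc ((Finset.univ : Finset {a // a ∈ Λ}).filter fun z => l1 (x - z.1) = 1).card
      ≤ _ := h
    _ ≤ ((Finset.univ : Finset (Fin d × Bool))).card := Finset.card_image_le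
    _ = 2 * d := by simp [Finset.card_univ, Fintype.card_prod]; ring

lemma nbr_card_le' (Λ : Finset (Site d)) (x : Site d) :
    ((Finset.univ : Finset {a // a ∈ Λ}).filter fun z => l1 (z.1 - x) = 1).card ≤ 2 * d := by
  have : ((Finset.univ : Finset {a // a ∈ Λ}).filter fun z => l1 (z.1 - x) = 1)
      = ((Finset.univ : Finset {a // a ∈ Λ}).filter fun z => l1 (x - z.1) = 1) := by
    apply Finset.filter_congr
    intro z _
    simp [l1_sub_comm]
  rw [this]
  exact nbr_card_le Λ x

/-- sum over neighbors bound -/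
lemma sum_nbr_le (Λ : Finset (Site d)) (x : Site d) (f : {a // a ∈ Λ} → ℝ) {bnd : ℝ}
    (hb : ∀ z, f z ≤ bnd) (h0 : 0 ≤ bnd) :
    ∑ z ∈ (Finset.univ.filter fun z : {a // a ∈ Λ} => l1 (x - z.1) = 1), f z ≤ 2 * d * bnd := by
  calc ∑ z ∈ (Finset.univ.filter fun z : {a // a ∈ Λ} => l1 (x - z.1) = 1), f z
      ≤ ((Finset.univ.filter fun z : {a // a ∈ Λ} => l1 (x - z.1) = 1)).card • bnd :=
        Finset.sum_le_card_nsmul _ _ _ (fun z _ => hb z)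
    _ = ((Finset.univ.filter fun z : {a // a ∈ Λ} => l1 (x - z.1) = 1)).card * bnd := by
        simp [nsmul_eq_mul]
    _ ≤ (2 * d) * bnd := by
        apply mul_le_mul_of_nonneg_right _ h0
        exact_mod_cast nbr_card_le Λ x

/-- The matrix `diag D - hopping` on `Λ`. -/
def AMat (Λ : Finset (Site d)) (D : {a // a ∈ Λ} → ℂ) : Matrix {a // a ∈ Λ} {a // a ∈ Λ} ℂ :=
  Matrix.of fun x y => (if x = y then D x else 0) - (if l1 (x.1 - y.1) = 1 then 1 else 0)

section allgood

variable (Λ : Finset (Site d)) (D : {a // a ∈ Λ} → ℂ)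

lemma row_sum (G : Matrix {a // a ∈ Λ} {a // a ∈ Λ} ℂ) (x y : {a // a ∈ Λ}) :
    (AMat Λ D * G) x y
      = D x * G x y - ∑ z ∈ (Finset.univ.filter fun z : {a // a ∈ Λ} => l1 (x.1 - z.1) = 1), G z y := by
  rw [Matrix.mul_apply]
  have : ∀ z : {a // a ∈ Λ}, (AMat Λ D) x z * G z y
      = (if x = z then D x * G z y else 0) - (if l1 (x.1 - z.1) = 1 then G z y else 0) := by
    intro z
    simp only [AMat, Matrix.of_apply, sub_mul, ite_mul, zero_mul, one_mul]
  rw [Finset.sum_congr rfl (fun z _ => this z), Finset.sum_sub_distrib]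
  congr 1
  · rw [Finset.sum_ite_eq (Finset.univ) x (fun z => D x * G z y)]
    simp
  · rw [Finset.sum_filter]

lemma col_sum (G : Matrix {a // a ∈ Λ} {a // a ∈ Λ} ℂ) (x y : {a // a ∈ Λ}) :
    (G * AMat Λ D) x y
      = G x y * D y - ∑ w ∈ (Finset.univ.filter fun w : {a // a ∈ Λ} => l1 (w.1 - y.1) = 1), G x w := by
  rw [Matrix.mul_apply]
  have : ∀ w : {a // a ∈ Λ}, G x w * (AMat Λ D) w y
      = (if w = y then G x w * D w else 0) - (if l1 (w.1 - y.1) = 1 then G x w else 0) := by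
    intro w
    simp only [AMat, Matrix.of_apply, mul_sub, mul_ite, mul_zero, mul_one]
  rw [Finset.sum_congr rfl (fun w _ => this w), Finset.sum_sub_distrib]
  congr 1
  · rw [Finset.sum_ite_eq' (Finset.univ) y (fun w => G x w * D w)]
    simp
  · rw [Finset.sum_filter]

theorem allgood (hd : 1 ≤ d) (M R : ℝ) (hR : 1 ≤ R) (hcond : 2*d*R ≤ M/2)
    (hD : ∀ x, M ≤ ‖D x‖) :
    IsUnit (AMat Λ D) ∧
    (∀ x y, ‖(AMat Λ D)⁻¹ x y‖ ≤ 2/M * (1/R)^(l1 (x.1 - y.1))) ∧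
    (∀ x y, x ≠ y → ‖(AMat Λ D)⁻¹ x y‖ * ‖D y‖ ≤ 4*d/M) ∧
    (∀ y, D y * (AMat Λ D)⁻¹ y y
      = 1 + ∑ z ∈ (Finset.univ.filter fun z : {a // a ∈ Λ} => l1 (y.1 - z.1) = 1), (AMat Λ D)⁻¹ z y) := by
  have hdR : (1:ℝ) ≤ 2*d*R := by
    have : (1:ℝ) ≤ (d:ℝ) := by exact_mod_cast hd
    nlinarith
  have hM : (2:ℝ) ≤ M := by nlinarith
  have hM0 : (0:ℝ) < M := by linarith
  have h2d : 2*(d:ℝ) ≤ M/2 := by nlinarith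
  -- invertibility
  have hdet : (AMat Λ D).det ≠ 0 := by
    intro h0
    obtain ⟨u, hu0, hu⟩ := (Matrix.exists_mulVec_eq_zero_iff).mpr h0
    obtain ⟨k0, hk0⟩ : ∃ k, u k ≠ 0 := by
      by_contra hc
      push_neg at hc
      exact hu0 (funext hc)
    obtain ⟨x0, -, hx0⟩ := Finset.exists_max_image Finset.univ (fun z => ‖u z‖)
      ⟨k0, Finset.mem_univ k0⟩
    have hx0pos : 0 < ‖u x0‖ :=
      lt_of_lt_of_le (by simpa using hk0) (hx0 k0 (Finset.mem_univ k0))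
    have hrow : (AMat Λ D).mulVec u x0 = 0 := congrFun hu x0
    have hexp : D x0 * u x0
        = ∑ z ∈ (Finset.univ.filter fun z : {a // a ∈ Λ} => l1 (x0.1 - z.1) = 1), u z := by
      have : (AMat Λ D).mulVec u x0
          = D x0 * u x0 - ∑ z ∈ (Finset.univ.filter fun z : {a // a ∈ Λ} => l1 (x0.1 - z.1) = 1), u z := by
        rw [Matrix.mulVec, dotProduct]
        have : ∀ z : {a // a ∈ Λ}, (AMat Λ D) x0 z * u z
            = (if x0 = z then D x0 * u z else 0) - (if l1 (x0.1 - z.1) = 1 then u z else 0) := by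
          intro z
          simp only [AMat, Matrix.of_apply, sub_mul, ite_mul, zero_mul, one_mul]
        rw [Finset.sum_congr rfl (fun z _ => this z), Finset.sum_sub_distrib]
        congr 1
        · rw [Finset.sum_ite_eq (Finset.univ) x0 (fun z => D x0 * u z)]
          simp
        · rw [Finset.sum_filter]
      rw [hrow] at this
      linear_combination -this
    have hlhs : M * ‖u x0‖ ≤ ‖D x0 * u x0‖ := by
      rw [norm_mul]
      exact mul_le_mul_of_nonneg_right (hD x0) (norm_nonneg _)
    have hrhs : ‖D x0 * u x0‖ ≤ 2*d * ‖u x0‖ := by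
      rw [hexp]
      calc ‖∑ z ∈ _, u z‖ ≤ ∑ z ∈ (Finset.univ.filter fun z : {a // a ∈ Λ} => l1 (x0.1 - z.1) = 1), ‖u z‖ := by
            exact norm_sum_le _ _
        _ ≤ 2*d * ‖u x0‖ :=
            sum_nbr_le Λ x0.1 _ (fun z => hx0 z (Finset.mem_univ z)) (norm_nonneg _)
    nlinarith
  have hdetU : IsUnit (AMat Λ D).det := isUnit_iff_ne_zero.mpr hdet
  have hU : IsUnit (AMat Λ D) := (Matrix.isUnit_iff_isUnit_det _).mpr hdetU
  set G := (AMat Λ D)⁻¹ with hG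
  have hAG : AMat Λ D * G = 1 := Matrix.mul_nonsing_inv _ hdetU
  have hGA : G * AMat Λ D = 1 := Matrix.nonsing_inv_mul _ hdetU
  have hrowid : ∀ x y, D x * G x y = (if x = y then 1 else 0)
      + ∑ z ∈ (Finset.univ.filter fun z : {a // a ∈ Λ} => l1 (x.1 - z.1) = 1), G z y := by
    intro x y
    have h1 := row_sum Λ D G x y
    rw [hAG, Matrix.one_apply] at h1
    linear_combination -h1
  have hcolid : ∀ x y, G x y * D y = (if x = y then 1 else 0)
      + ∑ w ∈ (Finset.univ.filter fun w : {a // a ∈ Λ} => l1 (w.1 - y.1) = 1), G x w := by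
    intro x y
    have h1 := col_sum Λ D G x y
    rw [hGA, Matrix.one_apply] at h1
    linear_combination -h1
  -- main decay bound
  have hdecay : ∀ x y, ‖G x y‖ ≤ 2/M * (1/R)^(l1 (x.1 - y.1)) := by
    intro x y
    set F : {a // a ∈ Λ} → ℝ := fun z => R ^ (l1 (z.1 - y.1)) * ‖G z y‖ with hF
    obtain ⟨xs, -, hxs⟩ := Finset.exists_max_image Finset.univ F ⟨x, Finset.mem_univ x⟩
    have hR0 : (0:ℝ) < R := lt_of_lt_of_le one_pos hR
    have hFnonneg : 0 ≤ F xs := mul_nonneg (pow_nonneg (le_of_lt hR0) _) (norm_nonneg _)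
    have hkey : M * F xs ≤ 1 + M/2 * F xs := by
      have habs : M * ‖G xs y‖ ≤ (if xs = y then 1 else 0)
          + ∑ z ∈ (Finset.univ.filter fun z : {a // a ∈ Λ} => l1 (xs.1 - z.1) = 1), ‖G z y‖ := by
        calc M * ‖G xs y‖ ≤ ‖D xs‖ * ‖G xs y‖ :=
              mul_le_mul_of_nonneg_right (hD xs) (norm_nonneg _)
          _ = ‖D xs * G xs y‖ := (norm_mul _ _).symm
          _ = ‖(if xs = y then (1:ℂ) else 0)
              + ∑ z ∈ (Finset.univ.filter fun z : {a // a ∈ Λ} => l1 (xs.1 - z.1) = 1), G z y‖ := by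
              rw [hrowid xs y]
          _ ≤ ‖if xs = y then (1:ℂ) else 0‖
              + ‖∑ z ∈ (Finset.univ.filter fun z : {a // a ∈ Λ} => l1 (xs.1 - z.1) = 1), G z y‖ :=
              norm_add_le _ _
          _ ≤ (if xs = y then 1 else 0)
              + ∑ z ∈ (Finset.univ.filter fun z : {a // a ∈ Λ} => l1 (xs.1 - z.1) = 1), ‖G z y‖ := by
              gcongr
              · split <;> simp
              · exact norm_sum_le _ _
      have hsum : R ^ (l1 (xs.1 - y.1)) * ∑ z ∈ (Finset.univ.filter fun z : {a // a ∈ Λ} => l1 (xs.1 - z.1) = 1), ‖G z y‖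
          ≤ 2*d*R * F xs := by
        rw [Finset.mul_sum]
        have hterm : ∀ z ∈ (Finset.univ.filter fun z : {a // a ∈ Λ} => l1 (xs.1 - z.1) = 1),
            R ^ (l1 (xs.1 - y.1)) * ‖G z y‖ ≤ R * F xs := by
          intro z hz
          have hzd := (Finset.mem_filter.mp hz).2
          have htri : l1 (xs.1 - y.1) ≤ 1 + l1 (z.1 - y.1) := by
            have := l1_triangle3 xs.1 z.1 y.1
            omega
          have hq : R ^ (l1 (xs.1 - y.1)) ≤ R * R ^ (l1 (z.1 - y.1)) := by
            calc R ^ (l1 (xs.1 - y.1)) ≤ R ^ (1 + l1 (z.1 - y.1)) := pow_le_pow_right₀ hR htri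
              _ = R * R ^ (l1 (z.1 - y.1)) := by rw [pow_add, pow_one]
          calc R ^ (l1 (xs.1 - y.1)) * ‖G z y‖
              ≤ (R * R ^ (l1 (z.1 - y.1))) * ‖G z y‖ :=
                mul_le_mul_of_nonneg_right hq (norm_nonneg _)
            _ = R * F z := by rw [hF]; ring
            _ ≤ R * F xs := mul_le_mul_of_nonneg_left (hxs z (Finset.mem_univ z)) (le_of_lt hR0)
        calc ∑ z ∈ (Finset.univ.filter fun z : {a // a ∈ Λ} => l1 (xs.1 - z.1) = 1),
              R ^ (l1 (xs.1 - y.1)) * ‖G z y‖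
            ≤ ∑ _z ∈ (Finset.univ.filter fun z : {a // a ∈ Λ} => l1 (xs.1 - z.1) = 1), R * F xs :=
              Finset.sum_le_sum hterm
          _ ≤ 2*d * (R * F xs) :=
              sum_nbr_le Λ xs.1 _ (fun _ => le_refl _) (mul_nonneg (le_of_lt hR0) hFnonneg)
          _ = 2*d*R * F xs := by ring
      have hite : R ^ (l1 (xs.1 - y.1)) * (if xs = y then (1:ℝ) else 0) ≤ 1 := by
        by_cases hxy : xs = y
        · have h0 : l1 (xs.1 - y.1) = 0 := by rw [hxy]; exact l1_self y.1
          rw [if_pos hxy, mul_one, h0, pow_zero]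
        · simp [hxy]
      have hmul := mul_le_mul_of_nonneg_left habs (pow_nonneg (le_of_lt hR0) (l1 (xs.1 - y.1)))
      have h2dRF : 2*d*R * F xs ≤ M/2 * F xs := mul_le_mul_of_nonneg_right hcond hFnonneg
      calc M * F xs = R ^ (l1 (xs.1 - y.1)) * (M * ‖G xs y‖) := by rw [hF]; ring
        _ ≤ R ^ (l1 (xs.1 - y.1)) * ((if xs = y then 1 else 0)
            + ∑ z ∈ (Finset.univ.filter fun z : {a // a ∈ Λ} => l1 (xs.1 - z.1) = 1), ‖G z y‖) := hmul
        _ = R ^ (l1 (xs.1 - y.1)) * (if xs = y then (1:ℝ) else 0)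
            + R ^ (l1 (xs.1 - y.1)) * ∑ z ∈ (Finset.univ.filter fun z : {a // a ∈ Λ} => l1 (xs.1 - z.1) = 1), ‖G z y‖ := by ring
        _ ≤ 1 + 2*d*R * F xs := add_le_add hite hsum
        _ ≤ 1 + M/2 * F xs := by linarith
    have hFxs : F xs ≤ 2 / M := by
      rw [le_div_iff₀ hM0]
      nlinarith
    have hFx : F x ≤ 2 / M := le_trans (hxs x (Finset.mem_univ x)) hFxs
    rw [hF] at hFx
    simp only at hFx
    have hRn : (0:ℝ) < R ^ (l1 (x.1 - y.1)) := pow_pos hR0 _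
    rw [one_div, inv_pow, ← div_eq_mul_inv, le_div_iff₀ hRn]
    calc ‖G x y‖ * R ^ (l1 (x.1 - y.1))
        = R ^ (l1 (x.1 - y.1)) * ‖G x y‖ := by ring
      _ ≤ 2 / M := hFx
  refine ⟨hU, hdecay, ?_, ?_⟩
  · intro x y hxy
    have h1 := hcolid x y
    rw [if_neg hxy, zero_add] at h1
    have h2 : ‖G x y‖ * ‖D y‖
        ≤ ∑ w ∈ (Finset.univ.filter fun w : {a // a ∈ Λ} => l1 (w.1 - y.1) = 1), ‖G x w‖ := by
      rw [← norm_mul, h1]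
      exact norm_sum_le _ _
    have h3 : ∑ w ∈ (Finset.univ.filter fun w : {a // a ∈ Λ} => l1 (w.1 - y.1) = 1), ‖G x w‖
        ≤ ((Finset.univ : Finset {a // a ∈ Λ}).filter fun w => l1 (w.1 - y.1) = 1).card * (2/M) := by
      have := Finset.sum_le_card_nsmul ((Finset.univ : Finset {a // a ∈ Λ}).filter fun w => l1 (w.1 - y.1) = 1)
        (fun w => ‖G x w‖) (2/M) (fun w _ => by
          calc ‖G x w‖ ≤ 2/M * (1/R) ^ (l1 (x.1 - w.1)) := hdecay x w
            _ ≤ 2/M * 1 := by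
                apply mul_le_mul_of_nonneg_left _ (by positivity)
                apply pow_le_one₀ (by positivity)
                rw [div_le_one (lt_of_lt_of_le one_pos hR)]
                exact hR
            _ = 2/M := mul_one _)
      simpa [nsmul_eq_mul] using this
    have h4 : (((Finset.univ : Finset {a // a ∈ Λ}).filter fun w => l1 (w.1 - y.1) = 1).card : ℝ) * (2/M)
        ≤ 2*d * (2/M) := by
      apply mul_le_mul_of_nonneg_right _ (by positivity)
      exact_mod_cast nbr_card_le' Λ y.1
    calc ‖G x y‖ * ‖D y‖
        ≤ _ := h2
      _ ≤ _ := h3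
      _ ≤ 2*d*(2/M) := h4
      _ = 4*d/M := by ring
  · intro y
    have h1 := hrowid y y
    rw [if_pos rfl] at h1
    exact h1

end allgood

section onebad

set_option maxHeartbeats 1000000 in
theorem det_bound (hd : 1 ≤ d) (Λ : Finset (Site d)) (D : {a // a ∈ Λ} → ℝ)
    (γ M R η : ℝ) (hR : 1 ≤ R) (hcond : 2*d*R ≤ M/2) (hγ1 : 1 ≤ γ) (hMγ : M ≤ γ)
    (hη0 : 0 < η) (hres : 32*d^2 ≤ η*M)
    (hDlow : ∀ x, η ≤ |D x|) (hDhigh : ∀ x, |D x| ≤ 3*γ)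
    (hone : ∀ x y, x ≠ y → M ≤ |D x| ∨ M ≤ |D y|) :
    IsUnit (AMat Λ (fun x => ((D x : ℝ) : ℂ))) ∧
    ∀ x y, ‖(AMat Λ (fun x => ((D x : ℝ) : ℂ)))⁻¹ x y‖ ≤
      (2/M + 704*γ^2/(η*M^2)) * (1/R)^(l1 (x.1 - y.1)) := by
  classical
  have hd1 : (1:ℝ) ≤ (d:ℝ) := by exact_mod_cast hd
  have hdR : (1:ℝ) ≤ 2*d*R := by nlinarith
  have hM4 : (4:ℝ) ≤ M := by nlinarith
  have hM0 : (0:ℝ) < M := by linarith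
  have hγ0 : (0:ℝ) < γ := by linarith
  have hKge : 2/M ≤ 2/M + 704*γ^2/(η*M^2) := by
    have : (0:ℝ) ≤ 704*γ^2/(η*M^2) := by positivity
    linarith
  have hKpow : ∀ n : ℕ, 2/M * (1/R)^n ≤ (2/M + 704*γ^2/(η*M^2)) * (1/R)^n := by
    intro n
    apply mul_le_mul_of_nonneg_right hKge
    positivity
  by_cases hgood : ∀ x, M ≤ |D x|
  · obtain ⟨hU, hdec, -, -⟩ := allgood Λ (fun x => ((D x : ℝ) : ℂ)) hd M R hR hcond
      (fun x => by rw [Complex.norm_real, Real.norm_eq_abs]; exact hgood x)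
    exact ⟨hU, fun x y => le_trans (hdec x y) (hKpow _)⟩
  · push_neg at hgood
    obtain ⟨b, hb⟩ := hgood
    have hgoodx : ∀ x, x ≠ b → M ≤ |D x| := fun x hx => (hone x b hx).resolve_right (not_le.mpr hb)
    set c : ℝ := if 0 ≤ D b then 8*γ else -8*γ with hc
    have hc8 : |c| = 8*γ := by
      rw [hc]; split
      · rw [abs_of_nonneg (by linarith)]
      · rw [abs_of_nonpos (by linarith)]; ring
    have hDbc8 : 8*γ ≤ |D b + c| := by
      rw [hc]; split
      · next h => rw [abs_of_nonneg (by linarith)]; linarith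
      · next h =>
          push_neg at h
          rw [abs_of_nonpos (by linarith)]; linarith
    have hDbc11 : |D b + c| ≤ 11*γ := by
      calc |D b + c| ≤ |D b| + |c| := abs_add_le _ _
        _ ≤ 3*γ + 8*γ := by rw [hc8]; linarith [hDhigh b]
        _ = 11*γ := by ring
    have hDbc0 : (0:ℝ) < |D b + c| := by linarith
    set D1 : {a // a ∈ Λ} → ℝ := fun x => if x = b then D b + c else D x with hD1
    have hD1g : ∀ x, M ≤ |D1 x| := by
      intro x
      simp only [hD1]
      by_cases hx : x = b
      · rw [if_pos hx]; linarith
      · rw [if_neg hx]; exact hgoodx x hx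
    have hD1b : D1 b = D b + c := by simp [hD1]
    obtain ⟨hU1, hdec1, href1, hrow1⟩ := allgood Λ (fun x => ((D1 x : ℝ) : ℂ)) hd M R hR hcond
      (fun x => by rw [Complex.norm_real, Real.norm_eq_abs]; exact hD1g x)
    set A1 := AMat Λ (fun x => ((D1 x : ℝ) : ℂ)) with hA1
    set G1 := A1⁻¹ with hG1
    set t := G1 b b with ht
    set r := ∑ z ∈ (Finset.univ.filter fun z : {a // a ∈ Λ} => l1 (b.1 - z.1) = 1), G1 z b with hr
    have hrowb : ((D1 b : ℝ) : ℂ) * t = 1 + r := hrow1 b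
    have hG1zb : ∀ z : {a // a ∈ Λ}, z ≠ b → ‖G1 z b‖ ≤ (4*d/M) / |D b + c| := by
      intro z hz
      have h1 := href1 z b hz
      rw [Complex.norm_real, Real.norm_eq_abs] at h1
      have h2 : |D1 b| = |D b + c| := by rw [hD1b]
      rw [h2] at h1
      rw [le_div_iff₀ hDbc0]
      exact h1
    have hrabs : ‖r‖ ≤ (8*d^2/M) / |D b + c| := by
      rw [hr]
      calc ‖∑ z ∈ _, G1 z b‖
          ≤ ∑ z ∈ (Finset.univ.filter fun z : {a // a ∈ Λ} => l1 (b.1 - z.1) = 1), ‖G1 z b‖ :=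
            norm_sum_le _ _
        _ ≤ ((Finset.univ.filter fun z : {a // a ∈ Λ} => l1 (b.1 - z.1) = 1)).card * ((4*d/M) / |D b + c|) := by
            have := Finset.sum_le_card_nsmul
              ((Finset.univ : Finset {a // a ∈ Λ}).filter fun z => l1 (b.1 - z.1) = 1)
              (fun z => ‖G1 z b‖) ((4*d/M) / |D b + c|)
              (fun z hz => by
                apply hG1zb
                intro hzb
                have := (Finset.mem_filter.mp hz).2
                rw [hzb] at this
                rw [l1_self] at this
                exact one_ne_zero this.symm)
            simpa [nsmul_eq_mul] using this
        _ ≤ 2*d * ((4*d/M) / |D b + c|) := by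
            apply mul_le_mul_of_nonneg_right _ (by positivity)
            exact_mod_cast nbr_card_le Λ b.1
        _ = (8*d^2/M) / |D b + c| := by ring
    set s : ℂ := 1 - (c:ℂ) * t with hs
    have hst : s * ((D1 b : ℝ) : ℂ) = ((D b : ℝ) : ℂ) - (c:ℂ) * r := by
      have hcast : ((D1 b : ℝ) : ℂ) = ((D b : ℝ):ℂ) + (c:ℂ) := by
        rw [hD1b]; push_cast; ring
      rw [hs]
      calc (1 - (c:ℂ) * t) * ((D1 b : ℝ) : ℂ)
          = ((D1 b : ℝ) : ℂ) - (c:ℂ) * (((D1 b : ℝ) : ℂ) * t) := by ring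
        _ = ((D1 b : ℝ) : ℂ) - (c:ℂ) * (1 + r) := by rw [hrowb]
        _ = ((D b : ℝ) : ℂ) - (c:ℂ) * r := by rw [hcast]; ring
    have hcr : ‖(c:ℂ) * r‖ ≤ η/2 := by
      rw [norm_mul, Complex.norm_real, Real.norm_eq_abs, hc8]
      calc 8*γ * ‖r‖ ≤ 8*γ * ((8*d^2/M) / |D b + c|) := by
            apply mul_le_mul_of_nonneg_left hrabs (by linarith)
        _ ≤ 8*γ * ((8*d^2/M) / (8*γ)) := by
            apply mul_le_mul_of_nonneg_left _ (by linarith)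
            apply div_le_div_of_nonneg_left (by positivity) (by linarith) hDbc8
        _ = 8*d^2/M := by field_simp
        _ ≤ η/2 := by
            rw [div_le_div_iff₀ hM0 two_pos]
            nlinarith
    have hsabs : η/2 ≤ ‖s‖ * |D b + c| := by
      have h1 : ‖((D b : ℝ) : ℂ) - (c:ℂ) * r‖ ≥ η/2 := by
        have h2 := norm_sub_norm_le ((D b : ℝ) : ℂ) ((c:ℂ) * r)
        rw [Complex.norm_real, Real.norm_eq_abs] at h2
        have := hDlow b
        linarith
      calc η/2 ≤ ‖((D b : ℝ) : ℂ) - (c:ℂ) * r‖ := h1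
        _ = ‖s * ((D1 b : ℝ) : ℂ)‖ := by rw [hst]
        _ = ‖s‖ * |D b + c| := by
            rw [norm_mul, Complex.norm_real, Real.norm_eq_abs, hD1b]
    have hs0 : s ≠ 0 := by
      intro h0
      rw [h0, norm_zero, zero_mul] at hsabs
      linarith
    have hcs : ‖(c:ℂ)/s‖ ≤ 176*γ^2/η := by
      rw [norm_div, Complex.norm_real, Real.norm_eq_abs, hc8]
      have hsa0 : 0 < ‖s‖ := by
        have := norm_pos_iff.mpr hs0
        exact this
      rw [div_le_div_iff₀ hsa0 hη0]
      -- 8γ * η ≤ 176 γ²/... : from hsabs : η/2 ≤ |s| * |Dbc| ≤ |s| * 11 γ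
      have h5 : η/2 ≤ ‖s‖ * (11*γ) := by
        calc η/2 ≤ ‖s‖ * |D b + c| := hsabs
          _ ≤ ‖s‖ * (11*γ) := by
              apply mul_le_mul_of_nonneg_left hDbc11 (norm_nonneg _)
      nlinarith [norm_nonneg s]
    set B : Matrix {a // a ∈ Λ} {a // a ∈ Λ} ℂ :=
      Matrix.of fun x y => G1 x y + ((c:ℂ)/s) * (G1 x b * G1 b y) with hB
    have hA1G1 : A1 * G1 = 1 := by
      rw [hG1]
      apply Matrix.mul_nonsing_inv
      rw [← Matrix.isUnit_iff_isUnit_det]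
      exact hU1
    have hAA1 : ∀ x z : {a // a ∈ Λ}, AMat Λ (fun x => ((D x : ℝ) : ℂ)) x z
        = A1 x z - (c:ℂ) * (if x = b ∧ z = b then 1 else 0) := by
      intro x z
      rw [hA1]
      simp only [AMat, Matrix.of_apply]
      by_cases hxz : x = z
      · subst hxz
        by_cases hxb : x = b
        · subst hxb
          simp only [and_self, eq_self_iff_true, if_true, hD1b]
          push_cast
          ring
        · simp only [hD1, if_neg hxb]
          have : ¬ (x = b ∧ x = b) := fun h => hxb h.1
          rw [if_neg this]
          ring
      · simp only [if_neg hxz]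
        have : ¬ (x = b ∧ z = b) := by
          rintro ⟨h1, h2⟩; exact hxz (h1.trans h2.symm)
        rw [if_neg this]
        ring
    have hAB : AMat Λ (fun x => ((D x : ℝ) : ℂ)) * B = 1 := by
      ext x y
      rw [Matrix.mul_apply, Matrix.one_apply]
      have hterm : ∀ z, AMat Λ (fun x => ((D x : ℝ) : ℂ)) x z * B z y
          = A1 x z * G1 z y + ((c:ℂ)/s) * (A1 x z * G1 z b) * G1 b y
            - (c:ℂ) * ((if x = b ∧ z = b then 1 else 0) * B z y) := by
        intro z
        rw [hAA1 x z, hB]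
        simp only [Matrix.of_apply]
        ring
      rw [Finset.sum_congr rfl (fun z _ => hterm z)]
      rw [Finset.sum_sub_distrib, Finset.sum_add_distrib]
      have e1 : ∑ z, A1 x z * G1 z y = (if x = y then 1 else 0) := by
        have := congrFun (congrFun hA1G1 x) y
        rw [Matrix.mul_apply] at this
        rw [this, Matrix.one_apply]
      have e2 : ∑ z, ((c:ℂ)/s) * (A1 x z * G1 z b) * G1 b y
          = ((c:ℂ)/s) * (if x = b then 1 else 0) * G1 b y := by
        rw [← Finset.sum_mul, ← Finset.mul_sum]
        congr 2
        have := congrFun (congrFun hA1G1 x) b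
        rw [Matrix.mul_apply] at this
        rw [this, Matrix.one_apply]
      have e3 : ∑ z, (c:ℂ) * ((if x = b ∧ z = b then 1 else 0) * B z y)
          = (c:ℂ) * (if x = b then B b y else 0) := by
        rw [← Finset.mul_sum]
        congr 1
        by_cases hxb : x = b
        · simp only [hxb, true_and]
          simp
        · simp only [hxb, false_and, if_false, zero_mul, Finset.sum_const_zero]
      rw [e1, e2, e3]
      by_cases hxb : x = b
      · have hzero : (c:ℂ)/s - (c:ℂ) - (c:ℂ)*((c:ℂ)/s) * (G1 b b) = 0 := by
          have hss : s = 1 - (c:ℂ) * (G1 b b) := by rw [hs, ht]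
          field_simp
          rw [hss]
          ring
        rw [if_pos hxb, if_pos hxb, hB]
        simp only [Matrix.of_apply]
        linear_combination (G1 b y) * hzero
      · rw [if_neg hxb, if_neg hxb]
        ring
    have hUfin : IsUnit (AMat Λ (fun x => ((D x : ℝ) : ℂ))) :=
      ⟨⟨_, B, hAB, mul_eq_one_comm.mp hAB⟩, rfl⟩
    have hinv : (AMat Λ (fun x => ((D x : ℝ) : ℂ)))⁻¹ = B := Matrix.inv_eq_right_inv hAB
    refine ⟨hUfin, ?_⟩
    intro x y
    rw [hinv, hB]
    simp only [Matrix.of_apply]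
    have hR0 : (0:ℝ) < R := lt_of_lt_of_le one_pos hR
    have h1R : (0:ℝ) ≤ 1/R := by positivity
    have h1R1 : 1/R ≤ 1 := by
      rw [div_le_one hR0]; exact hR
    calc ‖G1 x y + ((c:ℂ)/s) * (G1 x b * G1 b y)‖
        ≤ ‖G1 x y‖ + ‖(c:ℂ)/s‖ * (‖G1 x b‖ * ‖G1 b y‖) := by
          refine le_trans (norm_add_le _ _) ?_
          rw [norm_mul, norm_mul]
      _ ≤ 2/M * (1/R)^(l1 (x.1 - y.1))
          + (176*γ^2/η) * ((2/M * (1/R)^(l1 (x.1 - b.1))) * (2/M * (1/R)^(l1 (b.1 - y.1)))) := by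
          apply add_le_add (hdec1 x y)
          apply mul_le_mul hcs
            (mul_le_mul (hdec1 x b) (hdec1 b y) (norm_nonneg _) (by positivity))
            (mul_nonneg (norm_nonneg _) (norm_nonneg _))
            (by positivity)
      _ = 2/M * (1/R)^(l1 (x.1 - y.1))
          + (704*γ^2/(η*M^2)) * (1/R)^(l1 (x.1 - b.1) + l1 (b.1 - y.1)) := by
          rw [pow_add]
          field_simp
          ring
      _ ≤ 2/M * (1/R)^(l1 (x.1 - y.1)) + (704*γ^2/(η*M^2)) * (1/R)^(l1 (x.1 - y.1)) := by
          apply add_le_add_right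
          apply mul_le_mul_of_nonneg_left
            (pow_le_pow_of_le_one h1R h1R1 (l1_triangle3 x.1 b.1 y.1)) (by positivity)
      _ = (2/M + 704*γ^2/(η*M^2)) * (1/R)^(l1 (x.1 - y.1)) := by ring


end onebad

section cube

lemma mem_cube {L : ℝ} {i x : Site d} :
    x ∈ cube L i ↔ ∀ k, (x k - i k) ∈ Finset.Icc (-⌊L⌋) ⌊L⌋ := by
  unfold cube
  rw [Finset.mem_image]
  constructor
  · rintro ⟨a, ha, rfl⟩ k
    simpa using (Fintype.mem_piFinset.mp ha k)
  · intro h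
    refine ⟨x - i, Fintype.mem_piFinset.mpr (fun k => by simpa using h k), ?_⟩
    funext k
    simp

lemma center_mem_cube {L : ℝ} (hL : 0 ≤ L) (i : Site d) : i ∈ cube L i := by
  rw [mem_cube]
  intro k
  simp only [sub_self, Finset.mem_Icc]
  have : (0:ℤ) ≤ ⌊L⌋ := Int.floor_nonneg.mpr hL
  omega

lemma card_cube (L : ℝ) (i : Site d) : (cube L i).card ≤ (2*(⌊L⌋.toNat) + 1)^d := by
  unfold cube
  calc _ ≤ (Fintype.piFinset fun _ : Fin d => Finset.Icc (-⌊L⌋) ⌊L⌋).card := Finset.card_image_le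
    _ = ∏ _k : Fin d, (Finset.Icc (-⌊L⌋) ⌊L⌋).card := Fintype.card_piFinset _
    _ = ((⌊L⌋ + 1 - (-⌊L⌋)).toNat)^d := by rw [Int.card_Icc, Finset.prod_const, Finset.card_univ, Fintype.card_fin]
    _ ≤ (2*(⌊L⌋.toNat) + 1)^d := Nat.pow_le_pow_left (by omega) d

lemma boundary_dist {L : ℝ} {i j : Site d} (hb : IsBoundary (cube L i) j) :
    ⌊L⌋.toNat ≤ l1 (i - j) := by
  obtain ⟨hjΛ, j', hjj', hj'⟩ := hb
  obtain ⟨k0, hk⟩ := eq_unit_of_l1_eq_one hjj'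
  obtain ⟨m, hm⟩ : ∃ k, ¬ ((j' k - i k) ∈ Finset.Icc (-⌊L⌋) ⌊L⌋) := by
    by_contra hc
    push_neg at hc
    exact hj' (mem_cube.mpr hc)
  have hjm := (mem_cube.mp hjΛ) m
  rw [Finset.mem_Icc] at hjm hm
  have hdiff : (j m - j' m).natAbs ≤ 1 := by
    rcases hk with hk | hk
    · have h1 : j m - j' m = unitVec k0 m := by
        have := congrFun hk m
        simpa using this
      rw [h1]
      unfold unitVec
      split <;> simp
    · have h1 : j m - j' m = -unitVec k0 m := by
        have := congrFun hk m
        simpa using this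
      rw [h1]
      unfold unitVec
      split <;> simp
  have hsingle : (⌊L⌋.toNat) ≤ ((i - j) m).natAbs := by
    have him : (i - j) m = i m - j m := by simp
    rw [him]
    omega
  calc ⌊L⌋.toNat ≤ ((i - j) m).natAbs := hsingle
    _ ≤ l1 (i - j) := Finset.single_le_sum (f := fun k => ((i - j) k).natAbs)
        (fun _ _ => Nat.zero_le _) (Finset.mem_univ m)

end cube

section prob

variable {g : Measure ℝ} {P : Measure (Site d → ℝ)}

lemma prob_single (hP : IsProductMeasure g P) (k : Site d) (A : Set ℝ)
    (hA : MeasurableSet A) : P {v | v k ∈ A} = g A := by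
  have h := hP.2 {k} (fun _ => A) (fun _ => hA)
  have h1 : {v : Site d → ℝ | ∀ j ∈ ({k} : Finset (Site d)), v j ∈ A} = {v | v k ∈ A} := by
    ext v; simp
  rw [h1] at h
  rwa [Finset.prod_singleton] at h

lemma prob_pair (hP : IsProductMeasure g P) {k l : Site d} (hkl : k ≠ l) (A : Set ℝ)
    (hA : MeasurableSet A) : P {v | v k ∈ A ∧ v l ∈ A} = g A * g A := by
  have h := hP.2 {k, l} (fun _ => A) (fun _ => hA)
  have h1 : {v : Site d → ℝ | ∀ j ∈ ({k, l} : Finset (Site d)), v j ∈ A} = {v | v k ∈ A ∧ v l ∈ A} := by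
    ext v
    simp [Finset.mem_insert]
  rw [h1] at h
  rwa [Finset.prod_pair hkl] at h

end prob

end ISE

open ISE

set_option maxHeartbeats 4000000

/-- **Initial scale estimate.** Fix `p > 2d`. There exist `δ > 0` depending only on `d`
and `p`, and `a' > 0`, `C > 0`, `γ₀` such that for all `γ > γ₀` the following holds with
`L̃₀ = γ^δ` and `Λ = ([-L̃₀, L̃₀]^d ∩ ℤ^d) + i`: for every finite set
`S ⊂ [-2d-γ, 2d+γ]` of at most `C·γ` elements, with probability at least
`1 - C·L̃₀^{-p}`, for every `E ∈ S` and every `j ∈ ∂Λ`, `E - H_Λ` is invertible and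
`|(E - H_Λ)⁻¹(i,j)| ≤ e^{-a'(log γ)|i-j|}`. -/
theorem initial_scale_estimate (d : ℕ) (hd : 1 ≤ d) (p : ℝ) (hp : 2 * d < p) :
    ∃ δ > (0:ℝ), ∀ (g : Measure ℝ), NiceDisorder g →
      ∀ P : Measure (Site d → ℝ), IsProductMeasure g P →
      ∃ a' > (0:ℝ), ∃ C > (0:ℝ), ∃ γ₀ : ℝ, ∀ γ : ℝ, γ₀ < γ →
      ∀ i : Site d,
      ∀ S : Finset ℝ, ↑S ⊆ Set.Icc (-(2 * d) - γ) (2 * d + γ) →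
        (S.card : ℝ) ≤ C * γ →
        1 - ENNReal.ofReal (C * (γ ^ δ) ^ (-p)) ≤
          P (LocEvent γ a' 1 (cube (γ ^ δ) i) i S) := by
  classical
  have hd1 : (1:ℝ) ≤ (d:ℝ) := by exact_mod_cast hd
  have hdp0 : (0:ℝ) < (d:ℝ) + p := by nlinarith
  set δ : ℝ := 1/(32*((d:ℝ)+p)) with hδ
  have hδ0 : 0 < δ := by positivity
  have hδsum : δ*(d:ℝ) + δ*p = 1/32 := by
    rw [hδ]; field_simp
  refine ⟨δ, hδ0, ?_⟩
  intro g hg P hP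
  obtain ⟨hgprob, hgsupp, Cg, hgbnd⟩ := hg
  have hCg0 : (0:ℝ) ≤ (Cg:ℝ) := Cg.coe_nonneg
  refine ⟨1/16, by norm_num, 1, one_pos, ?_⟩
  have hev : ∀ᶠ γ : ℝ in Filter.atTop,
      ((1 ≤ γ ∧ 2*(d:ℝ) ≤ γ) ∧ (4*(d:ℝ) ≤ γ^((1:ℝ)/32) ∧ 32*(d:ℝ)^2 ≤ γ^((1:ℝ)/32))
        ∧ (1408 ≤ γ^((19:ℝ)/16) ∧ 97 ≤ γ^δ) ∧ (4*3^d*(Cg:ℝ) ≤ γ^((1:ℝ)/32)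
        ∧ 8*9^d*(Cg:ℝ)^2 ≤ γ^((1:ℝ)/2))) := by
    refine (((Filter.eventually_ge_atTop 1).and (Filter.eventually_ge_atTop _)).and
      (((Filter.Tendsto.eventually_ge_atTop (tendsto_rpow_atTop (by norm_num)) _).and
        (Filter.Tendsto.eventually_ge_atTop (tendsto_rpow_atTop (by norm_num)) _)).and
      ((((Filter.Tendsto.eventually_ge_atTop (tendsto_rpow_atTop (by norm_num)) _).and
        (Filter.Tendsto.eventually_ge_atTop (tendsto_rpow_atTop hδ0) _))).and
        ((Filter.Tendsto.eventually_ge_atTop (tendsto_rpow_atTop (by norm_num)) _).and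
        (Filter.Tendsto.eventually_ge_atTop (tendsto_rpow_atTop (by norm_num)) _)))))
  obtain ⟨γ₀, hγ₀⟩ := Filter.eventually_atTop.mp hev
  refine ⟨γ₀, ?_⟩
  intro γ hγ i S hS hcard
  obtain ⟨⟨h1γ, h2dγ⟩, ⟨hA3, hA4⟩, ⟨hA5, hA6⟩, hA7, hA8⟩ := hγ₀ γ (le_of_lt hγ)
  have hγ0 : (0:ℝ) < γ := lt_of_lt_of_le one_pos h1γ
  have hmono : ∀ {a b : ℝ}, a ≤ b → γ^a ≤ γ^b := fun h => Real.rpow_le_rpow_of_exponent_le h1γ h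
  set L : ℝ := γ ^ δ with hL
  set Λ : Finset (Site d) := cube L i with hΛ
  set M : ℝ := γ ^ ((1:ℝ)/8) with hM
  set η : ℝ := γ ^ (-(1:ℝ)/16) with hη
  set R : ℝ := M / (4*(d:ℝ)) with hR
  have hM0 : 0 < M := Real.rpow_pos_of_pos hγ0 _
  have hη0 : 0 < η := Real.rpow_pos_of_pos hγ0 _
  have hL0 : 0 < L := Real.rpow_pos_of_pos hγ0 _
  have hd0 : (0:ℝ) < (d:ℝ) := by linarith
  have h32M : γ^((1:ℝ)/32) ≤ M := hmono (by norm_num)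
  have hM4d : 4*(d:ℝ) ≤ M := le_trans hA3 h32M
  have hR1 : 1 ≤ R := by
    rw [hR, le_div_iff₀ (by positivity)]
    linarith
  have hcond : 2*(d:ℝ)*R ≤ M/2 := by
    have hdne : (d:ℝ) ≠ 0 := by positivity
    have heq : 2*(d:ℝ)*(M/(4*(d:ℝ))) = M/2 := by field_simp; ring
    rw [hR, heq]
  have hMγ : M ≤ γ := by
    calc M ≤ γ^((1:ℝ)) := hmono (by norm_num)
      _ = γ := Real.rpow_one γ
  have hres : 32*(d:ℝ)^2 ≤ η*M := by
    have hηM : η*M = γ^((1:ℝ)/16) := by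
      rw [hη, hM, ← Real.rpow_add hγ0]; norm_num
    rw [hηM]
    exact le_trans hA4 (hmono (by norm_num))
  -- floor bound
  have hN96 : 96 ≤ ⌊L⌋.toNat := by
    have h1 : (96:ℤ) ≤ ⌊L⌋ := Int.le_floor.mpr (by push_cast; linarith)
    omega
  -- resonance helper
  have hresIcc : ∀ (E w r' : ℝ), |E - γ*w| < r' → w ∈ Set.Icc ((E-r')/γ) ((E+r')/γ) := by
    intro E w r' habs
    rw [abs_lt] at habs
    rw [Set.mem_Icc]
    constructor
    · rw [div_le_iff₀ hγ0]
      have h2 := habs.2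
      nlinarith [h2]
    · rw [le_div_iff₀ hγ0]
      have h1 := habs.1
      nlinarith [h1]
  set I : ℝ → Set ℝ := fun E => Set.Icc ((E-η)/γ) ((E+η)/γ) with hIdef
  set J : ℝ → Set ℝ := fun E => Set.Icc ((E-M)/γ) ((E+M)/γ) with hJdef
  set bad0 : Set (Site d → ℝ) := ⋃ k ∈ Λ, {v | v k ∈ (Set.Icc (-1:ℝ) 1)ᶜ} with hbad0
  set bad1 : Set (Site d → ℝ) := ⋃ E ∈ S, ⋃ k ∈ Λ, {v | v k ∈ I E} with hbad1
  set bad2 : Set (Site d → ℝ) := ⋃ E ∈ S, ⋃ k ∈ Λ, ⋃ l ∈ Λ,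
    (if k = l then (∅ : Set (Site d → ℝ)) else {v | v k ∈ J E ∧ v l ∈ J E}) with hbad2
  -- coverage
  have hcover : ∀ v, v ∉ bad0 → v ∉ bad1 → v ∉ bad2 → v ∈ LocEvent γ (1/16) 1 Λ i S := by
    intro v h0 h1 h2
    have h0' : ∀ k ∈ Λ, v k ∈ Set.Icc (-1:ℝ) 1 := by
      intro k hk
      by_contra hc
      exact h0 (Set.mem_iUnion.mpr ⟨k, Set.mem_iUnion.mpr ⟨hk, hc⟩⟩)
    have h1' : ∀ E ∈ S, ∀ k ∈ Λ, v k ∉ I E := by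
      intro E hE k hk hc
      exact h1 (Set.mem_iUnion.mpr ⟨E, Set.mem_iUnion.mpr ⟨hE,
        Set.mem_iUnion.mpr ⟨k, Set.mem_iUnion.mpr ⟨hk, hc⟩⟩⟩⟩)
    have h2' : ∀ E ∈ S, ∀ k ∈ Λ, ∀ l ∈ Λ, k ≠ l → ¬(v k ∈ J E ∧ v l ∈ J E) := by
      intro E hE k hk l hl hkl hc
      apply h2
      refine Set.mem_iUnion.mpr ⟨E, Set.mem_iUnion.mpr ⟨hE,
        Set.mem_iUnion.mpr ⟨k, Set.mem_iUnion.mpr ⟨hk,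
        Set.mem_iUnion.mpr ⟨l, Set.mem_iUnion.mpr ⟨hl, ?_⟩⟩⟩⟩⟩⟩
      rw [if_neg hkl]
      exact hc
    simp only [LocEvent, Set.mem_setOf_eq]
    intro E hE j hbj
    have hEIcc := hS hE
    rw [Set.mem_Icc] at hEIcc
    set D : {a // a ∈ Λ} → ℝ := fun x => E - γ * v x.1 with hD
    have hDlow : ∀ x, η ≤ |D x| := by
      intro x
      by_contra hc
      push_neg at hc
      exact h1' E hE x.1 x.2 (hresIcc E (v x.1) η hc)
    have hDhigh : ∀ x, |D x| ≤ 3*γ := by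
      intro x
      have hv := h0' x.1 x.2
      rw [Set.mem_Icc] at hv
      rw [hD]
      rw [abs_le]
      have hv1 : γ * (-1) ≤ γ * v x.1 := mul_le_mul_of_nonneg_left hv.1 hγ0.le
      have hv2 : γ * v x.1 ≤ γ * 1 := mul_le_mul_of_nonneg_left hv.2 hγ0.le
      constructor
      · simp only
        linarith [hEIcc.1]
      · simp only
        linarith [hEIcc.2]
    have hone : ∀ x y : {a // a ∈ Λ}, x ≠ y → M ≤ |D x| ∨ M ≤ |D y| := by
      intro x y hxy
      by_contra hc
      push_neg at hc
      obtain ⟨hcx, hcy⟩ := hc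
      refine h2' E hE x.1 x.2 y.1 y.2 (fun hc' => hxy (Subtype.ext hc')) ⟨?_, ?_⟩
      · exact hresIcc E (v x.1) M hcx
      · exact hresIcc E (v y.1) M hcy
    obtain ⟨hU, hbnd⟩ := det_bound hd Λ D γ M R η hR1 hcond h1γ hMγ hη0 hres hDlow hDhigh hone
    have hmat : (E:ℂ) • (1 : Matrix Λ Λ ℂ) - HMat γ v Λ = AMat Λ (fun x => ((D x : ℝ) : ℂ)) := by
      ext x y
      simp only [Matrix.sub_apply, Matrix.smul_apply, Matrix.one_apply, HMat, AMat,
        Matrix.of_apply, smul_eq_mul, hD]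
      by_cases hxy : x = y
      · rw [if_pos hxy, if_pos hxy, if_pos hxy]
        have hl0 : l1 (x.1 - y.1) = 0 := by rw [hxy]; exact l1_self y.1
        rw [hl0]
        simp only [if_neg (by norm_num : (0:ℕ) ≠ 1)]
        rw [hxy]
        push_cast
        ring
      · rw [if_neg hxy, if_neg hxy, if_neg hxy]
        ring
    constructor
    · rw [hmat]
      exact hU
    · intro hi hj
      rw [hmat]
      refine le_trans (hbnd ⟨i, hi⟩ ⟨j, hj⟩) ?_
      -- numeric comparison
      set n : ℕ := l1 (i - j) with hn
      have hn96 : 96 ≤ n := le_trans hN96 (boundary_dist hbj)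
      have hγ3 : (1:ℝ) ≤ γ^(3:ℝ) := Real.one_le_rpow h1γ (by norm_num)
      have hKbound : 2/M + 704*γ^2/(η*M^2) ≤ γ^(3:ℝ) := by
        have hM4 : (4:ℝ) ≤ M := by nlinarith
        have hden : η * M^2 = γ^((3:ℝ)/16) := by
          rw [hη, hM, ← Real.rpow_natCast (γ^((1:ℝ)/8)) 2, ← Real.rpow_mul hγ0.le,
            ← Real.rpow_add hγ0]
          norm_num
        have hnum : (γ:ℝ)^2 = γ^((2:ℝ)) := by
          rw [← Real.rpow_natCast γ 2]
          norm_num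
        have hterm2 : 704*γ^2/(η*M^2) = 704*γ^((29:ℝ)/16) := by
          rw [hden, hnum, mul_div_assoc, ← Real.rpow_sub hγ0]
          norm_num
        have hsplit : γ^(3:ℝ) = γ^((29:ℝ)/16) * γ^((19:ℝ)/16) := by
          rw [← Real.rpow_add hγ0]
          norm_num
        have h2916 : (0:ℝ) < γ^((29:ℝ)/16) := Real.rpow_pos_of_pos hγ0 _
        have hhalf : 704*γ^((29:ℝ)/16) ≤ γ^(3:ℝ)/2 := by
          rw [hsplit]
          have hh := mul_le_mul_of_nonneg_left hA5 h2916.le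
          linarith [hh]
        have h2M : 2/M ≤ γ^(3:ℝ)/2 := by
          rw [div_le_div_iff₀ hM0 (by norm_num)]
          have hh : (1:ℝ) * 4 ≤ γ^(3:ℝ) * M :=
            mul_le_mul hγ3 hM4 (by norm_num) (le_trans zero_le_one hγ3)
          linarith [hh]
        rw [hterm2]
        linarith
      have hstep1 : γ^(3:ℝ) ≤ (γ^((1:ℝ)/32))^n := by
        rw [← Real.rpow_natCast (γ^((1:ℝ)/32)) n, ← Real.rpow_mul hγ0.le]
        apply hmono
        have : (96:ℝ) ≤ (n:ℝ) := by exact_mod_cast hn96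
        linarith
      have hstep2 : γ^((1:ℝ)/32) * (1/R) ≤ γ^(-(1:ℝ)/16) := by
        rw [hR, one_div_div, ← mul_div_assoc]
        rw [div_le_iff₀ hM0]
        have h116 : γ^(-(1:ℝ)/16) * M = γ^((1:ℝ)/16) := by
          rw [hM, ← Real.rpow_add hγ0]; norm_num
        have h132 : γ^((1:ℝ)/32) * γ^((1:ℝ)/32) = γ^((1:ℝ)/16) := by
          rw [← Real.rpow_add hγ0]; norm_num
        rw [h116, ← h132]
        have h32pos : (0:ℝ) < γ^((1:ℝ)/32) := Real.rpow_pos_of_pos hγ0 _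
        have hh := mul_le_mul_of_nonneg_left hA3 h32pos.le
        linarith [hh]
      have hexp : ((γ:ℝ)^(-(1:ℝ)/16))^n = Real.exp (-(1/16 * Real.log γ) * (n:ℝ)) := by
        rw [← Real.rpow_natCast (γ^(-(1:ℝ)/16)) n, ← Real.rpow_mul hγ0.le,
          Real.rpow_def_of_pos hγ0]
        congr 1
        ring
      rw [one_mul, ← hexp]
      have hRinv0 : (0:ℝ) ≤ 1/R := by positivity
      calc (2/M + 704*γ^2/(η*M^2)) * (1/R)^n
          ≤ γ^(3:ℝ) * (1/R)^n := mul_le_mul_of_nonneg_right hKbound (by positivity)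
        _ ≤ (γ^((1:ℝ)/32))^n * (1/R)^n := mul_le_mul_of_nonneg_right hstep1 (by positivity)
        _ = (γ^((1:ℝ)/32) * (1/R))^n := (mul_pow _ _ n).symm
        _ ≤ (γ^(-(1:ℝ)/16))^n := pow_le_pow_left₀ (by positivity) hstep2 n
  -- probability bounds
  have hIcc_len : ∀ E r' : ℝ, (E+r')/γ - (E-r')/γ = 2*r'/γ := by
    intro E r'
    field_simp
    ring
  have hgI : ∀ E : ℝ, g (I E) ≤ (Cg : ℝ≥0∞) * ENNReal.ofReal (2*η/γ) := by
    intro E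
    calc g (I E) ≤ (Cg:ℝ≥0∞) * volume (I E) := hgbnd _
      _ = (Cg:ℝ≥0∞) * ENNReal.ofReal (2*η/γ) := by
          rw [hIdef]
          simp only
          rw [Real.volume_Icc, hIcc_len]
  have hgJ : ∀ E : ℝ, g (J E) ≤ (Cg : ℝ≥0∞) * ENNReal.ofReal (2*M/γ) := by
    intro E
    calc g (J E) ≤ (Cg:ℝ≥0∞) * volume (J E) := hgbnd _
      _ = (Cg:ℝ≥0∞) * ENNReal.ofReal (2*M/γ) := by
          rw [hJdef]
          simp only
          rw [Real.volume_Icc, hIcc_len]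
  have hPbad0 : P bad0 = 0 := by
    rw [hbad0]
    refine le_antisymm ?_ (by positivity)
    calc P (⋃ k ∈ Λ, {v : Site d → ℝ | v k ∈ (Set.Icc (-1:ℝ) 1)ᶜ})
        ≤ ∑ k ∈ Λ, P {v : Site d → ℝ | v k ∈ (Set.Icc (-1:ℝ) 1)ᶜ} := measure_biUnion_finset_le _ _
      _ = 0 := by
          refine Finset.sum_eq_zero (fun k _ => ?_)
          rw [prob_single hP k _ measurableSet_Icc.compl]
          exact hgsupp
  have hPbad1 : P bad1 ≤ (S.card : ℝ≥0∞) * ((Λ.card : ℝ≥0∞) * ((Cg:ℝ≥0∞) * ENNReal.ofReal (2*η/γ))) := by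
    rw [hbad1]
    calc P (⋃ E ∈ S, ⋃ k ∈ Λ, {v : Site d → ℝ | v k ∈ I E})
        ≤ ∑ E ∈ S, P (⋃ k ∈ Λ, {v : Site d → ℝ | v k ∈ I E}) := measure_biUnion_finset_le _ _
      _ ≤ ∑ E ∈ S, ∑ k ∈ Λ, P {v : Site d → ℝ | v k ∈ I E} :=
          Finset.sum_le_sum (fun E _ => measure_biUnion_finset_le _ _)
      _ ≤ ∑ E ∈ S, ∑ k ∈ Λ, (Cg:ℝ≥0∞) * ENNReal.ofReal (2*η/γ) :=
          Finset.sum_le_sum (fun E _ => Finset.sum_le_sum (fun k _ => by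
            rw [prob_single hP k _ measurableSet_Icc]
            exact hgI E))
      _ = (S.card : ℝ≥0∞) * ((Λ.card : ℝ≥0∞) * ((Cg:ℝ≥0∞) * ENNReal.ofReal (2*η/γ))) := by
          simp [Finset.sum_const, nsmul_eq_mul, mul_assoc]
  have hPbad2 : P bad2 ≤ (S.card : ℝ≥0∞) * ((Λ.card : ℝ≥0∞) * ((Λ.card : ℝ≥0∞) *
      (((Cg:ℝ≥0∞) * ENNReal.ofReal (2*M/γ)) * ((Cg:ℝ≥0∞) * ENNReal.ofReal (2*M/γ))))) := by
    rw [hbad2]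
    calc P (⋃ E ∈ S, ⋃ k ∈ Λ, ⋃ l ∈ Λ, (if k = l then (∅ : Set (Site d → ℝ)) else {v | v k ∈ J E ∧ v l ∈ J E}))
        ≤ ∑ E ∈ S, P (⋃ k ∈ Λ, ⋃ l ∈ Λ, (if k = l then (∅ : Set (Site d → ℝ)) else {v | v k ∈ J E ∧ v l ∈ J E})) :=
          measure_biUnion_finset_le _ _
      _ ≤ ∑ E ∈ S, ∑ k ∈ Λ, P (⋃ l ∈ Λ, (if k = l then (∅ : Set (Site d → ℝ)) else {v | v k ∈ J E ∧ v l ∈ J E})) :=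
          Finset.sum_le_sum (fun E _ => measure_biUnion_finset_le _ _)
      _ ≤ ∑ E ∈ S, ∑ k ∈ Λ, ∑ l ∈ Λ, P (if k = l then (∅ : Set (Site d → ℝ)) else {v | v k ∈ J E ∧ v l ∈ J E}) :=
          Finset.sum_le_sum (fun E _ => Finset.sum_le_sum (fun k _ => measure_biUnion_finset_le _ _))
      _ ≤ ∑ E ∈ S, ∑ k ∈ Λ, ∑ l ∈ Λ, ((Cg:ℝ≥0∞) * ENNReal.ofReal (2*M/γ)) * ((Cg:ℝ≥0∞) * ENNReal.ofReal (2*M/γ)) := by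
          refine Finset.sum_le_sum (fun E _ => Finset.sum_le_sum (fun k _ => Finset.sum_le_sum (fun l _ => ?_)))
          by_cases hkl : k = l
          · rw [if_pos hkl]
            simp
          · rw [if_neg hkl]
            rw [prob_pair hP hkl _ measurableSet_Icc]
            exact mul_le_mul' (hgJ E) (hgJ E)
      _ = _ := by
          simp [Finset.sum_const, nsmul_eq_mul, mul_assoc]
  -- real number bound
  have hΛcard : ((Λ.card:ℝ)) ≤ 3^d * γ^(δ*(d:ℝ)) := by
    have h1 : Λ.card ≤ (2*(⌊L⌋.toNat) + 1)^d := card_cube L i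
    have h1' : (Λ.card : ℝ) ≤ ((2*(⌊L⌋.toNat:ℝ) + 1))^d := by
      calc (Λ.card:ℝ) ≤ (((2*(⌊L⌋.toNat) + 1)^d : ℕ) : ℝ) := by exact_mod_cast h1
        _ = ((2*(⌊L⌋.toNat:ℝ) + 1))^d := by push_cast; ring
    have hfloorL : (⌊L⌋.toNat : ℝ) ≤ L := by
      have h0 : (0:ℤ) ≤ ⌊L⌋ := Int.floor_nonneg.mpr hL0.le
      have hcast : ((⌊L⌋.toNat : ℕ) : ℝ) = ((⌊L⌋ : ℤ) : ℝ) := by exact_mod_cast Int.toNat_of_nonneg h0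
      rw [hcast]
      exact Int.floor_le L
    have hL1 : (1:ℝ) ≤ L := by linarith
    calc (Λ.card:ℝ) ≤ ((2*(⌊L⌋.toNat:ℝ) + 1))^d := h1'
      _ ≤ (3*L)^d := pow_le_pow_left₀ (by positivity) (by linarith) d
      _ = 3^d * L^d := mul_pow _ _ _
      _ = 3^d * γ^(δ*(d:ℝ)) := by
          rw [hL, ← Real.rpow_natCast (γ^δ) d, ← Real.rpow_mul hγ0.le]
  have hcardS : (S.card:ℝ) ≤ γ := by linarith [hcard]
  have hcardS0 : (0:ℝ) ≤ (S.card:ℝ) := Nat.cast_nonneg _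
  have hΛ0 : (0:ℝ) ≤ (Λ.card:ℝ) := Nat.cast_nonneg _
  set t1 : ℝ := (S.card:ℝ) * ((Λ.card:ℝ) * ((Cg:ℝ) * (2*η/γ))) with ht1def
  set t2 : ℝ := (S.card:ℝ) * ((Λ.card:ℝ) * ((Λ.card:ℝ) * (((Cg:ℝ) * (2*M/γ)) * ((Cg:ℝ) * (2*M/γ))))) with ht2def
  have ht1nn : (0:ℝ) ≤ t1 := by
    rw [ht1def]
    exact mul_nonneg hcardS0 (mul_nonneg hΛ0 (by positivity))
  have ht2nn : (0:ℝ) ≤ t2 := by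
    rw [ht2def]
    exact mul_nonneg hcardS0 (mul_nonneg hΛ0 (mul_nonneg hΛ0 (by positivity)))
  have hQpos : (0:ℝ) < γ^(δ*(-p)) := Real.rpow_pos_of_pos hγ0 _
  have ht1 : t1 ≤ (1/2) * γ^(δ*(-p)) := by
    have hb1 : t1 ≤ γ * ((3^d * γ^(δ*(d:ℝ))) * ((Cg:ℝ) * (2*η/γ))) := by
      rw [ht1def]
      have hf : (0:ℝ) ≤ (Cg:ℝ) * (2*η/γ) := by positivity
      exact mul_le_mul hcardS (mul_le_mul_of_nonneg_right hΛcard hf)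
        (mul_nonneg hΛ0 hf) (by positivity)
    have hγne : γ ≠ 0 := ne_of_gt hγ0
    have heq : γ * ((3^d * γ^(δ*(d:ℝ))) * ((Cg:ℝ) * (2*η/γ))) = 2*3^d*(Cg:ℝ) * γ^(δ*(d:ℝ) - 1/16) := by
      have e1 : γ^(δ*(d:ℝ)) * η = γ^(δ*(d:ℝ) - 1/16) := by
        rw [hη, ← Real.rpow_add hγ0]
        congr 1
        ring
      rw [← e1]
      field_simp
    have hsplit : γ^(δ*(-p)) = γ^(δ*(d:ℝ) - 1/16) * γ^((1:ℝ)/32) := by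
      rw [← Real.rpow_add hγ0]
      congr 1
      linarith [hδsum]
    have hpos2 : (0:ℝ) < γ^(δ*(d:ℝ) - 1/16) := Real.rpow_pos_of_pos hγ0 _
    calc t1 ≤ 2*3^d*(Cg:ℝ) * γ^(δ*(d:ℝ) - 1/16) := by rw [← heq]; exact hb1
      _ ≤ (1/2) * γ^(δ*(-p)) := by
          rw [hsplit]
          have hh := mul_le_mul_of_nonneg_right hA7 hpos2.le
          linarith [hh]
  have ht2 : t2 ≤ (1/2) * γ^(δ*(-p)) := by
    have hb1 : t2 ≤ γ * ((3^d * γ^(δ*(d:ℝ))) * ((3^d * γ^(δ*(d:ℝ))) * (((Cg:ℝ) * (2*M/γ)) * ((Cg:ℝ) * (2*M/γ))))) := by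
      rw [ht2def]
      have hf : (0:ℝ) ≤ ((Cg:ℝ) * (2*M/γ)) * ((Cg:ℝ) * (2*M/γ)) := by positivity
      refine mul_le_mul hcardS ?_ (mul_nonneg hΛ0 (mul_nonneg hΛ0 hf)) (by positivity)
      exact mul_le_mul hΛcard (mul_le_mul_of_nonneg_right hΛcard hf)
        (mul_nonneg hΛ0 hf) (by positivity)
    have heq : γ * ((3^d * γ^(δ*(d:ℝ))) * ((3^d * γ^(δ*(d:ℝ))) * (((Cg:ℝ) * (2*M/γ)) * ((Cg:ℝ) * (2*M/γ)))))
        = 4*9^d*(Cg:ℝ)^2 * γ^(δ*(d:ℝ) + δ*(d:ℝ) + 1/8 + 1/8 - 1) := by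
      have hγne : γ ≠ 0 := ne_of_gt hγ0
      have h9 : ((9:ℝ))^d = 3^d * 3^d := by rw [← mul_pow]; norm_num
      have e2 : γ^(δ*(d:ℝ)) * (γ^(δ*(d:ℝ)) * (M * M)) = γ^(δ*(d:ℝ) + δ*(d:ℝ) + 1/8 + 1/8) := by
        rw [hM, ← Real.rpow_add hγ0, ← Real.rpow_add hγ0, ← Real.rpow_add hγ0]
        congr 1
        ring
      have e3 : γ^(δ*(d:ℝ) + δ*(d:ℝ) + 1/8 + 1/8 - 1) = γ^(δ*(d:ℝ) + δ*(d:ℝ) + 1/8 + 1/8) / γ := by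
        rw [Real.rpow_sub hγ0, Real.rpow_one]
      rw [e3, ← e2, h9]
      field_simp
      ring
    have hexple : δ*(d:ℝ) + δ*(d:ℝ) + 1/8 + 1/8 - 1 ≤ δ*(-p) - 1/2 := by
      have hδd0 : 0 ≤ δ*(d:ℝ) := by positivity
      have hδp0 : 0 ≤ δ*p := by nlinarith
      linarith [hδsum]
    have hsplit : γ^(δ*(-p)) = γ^(δ*(-p) - 1/2) * γ^((1:ℝ)/2) := by
      rw [← Real.rpow_add hγ0]
      congr 1
      ring
    have hstep : γ^(δ*(d:ℝ) + δ*(d:ℝ) + 1/8 + 1/8 - 1) ≤ γ^(δ*(-p) - 1/2) := hmono hexple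
    have hpos2 : (0:ℝ) < γ^(δ*(-p) - 1/2) := Real.rpow_pos_of_pos hγ0 _
    calc t2 ≤ 4*9^d*(Cg:ℝ)^2 * γ^(δ*(d:ℝ) + δ*(d:ℝ) + 1/8 + 1/8 - 1) := by rw [← heq]; exact hb1
      _ ≤ 4*9^d*(Cg:ℝ)^2 * γ^(δ*(-p) - 1/2) := by
          apply mul_le_mul_of_nonneg_left hstep (by positivity)
      _ ≤ (1/2) * γ^(δ*(-p)) := by
          rw [hsplit]
          have hh := mul_le_mul_of_nonneg_right hA8 hpos2.le
          linarith [hh]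
  have htarget : (1:ℝ) * (γ^δ)^(-p) = γ^(δ*(-p)) := by
    rw [one_mul, ← Real.rpow_mul hγ0.le]
  -- convert ENNReal bounds to ofReal
  have hT1 : (S.card : ℝ≥0∞) * ((Λ.card : ℝ≥0∞) * ((Cg:ℝ≥0∞) * ENNReal.ofReal (2*η/γ))) = ENNReal.ofReal t1 := by
    rw [ht1def]
    rw [← ENNReal.ofReal_natCast S.card, ← ENNReal.ofReal_natCast Λ.card, ← ENNReal.ofReal_coe_nnreal]
    rw [← ENNReal.ofReal_mul hCg0, ← ENNReal.ofReal_mul hΛ0, ← ENNReal.ofReal_mul hcardS0]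
  have hT2 : (S.card : ℝ≥0∞) * ((Λ.card : ℝ≥0∞) * ((Λ.card : ℝ≥0∞) *
      (((Cg:ℝ≥0∞) * ENNReal.ofReal (2*M/γ)) * ((Cg:ℝ≥0∞) * ENNReal.ofReal (2*M/γ))))) = ENNReal.ofReal t2 := by
    rw [ht2def]
    rw [← ENNReal.ofReal_natCast S.card, ← ENNReal.ofReal_natCast Λ.card, ← ENNReal.ofReal_coe_nnreal]
    rw [← ENNReal.ofReal_mul hCg0]
    rw [← ENNReal.ofReal_mul (by positivity : (0:ℝ) ≤ (Cg:ℝ)*(2*M/γ))]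
    rw [← ENNReal.ofReal_mul hΛ0, ← ENNReal.ofReal_mul hΛ0, ← ENNReal.ofReal_mul hcardS0]
  have hPbadtotal : P (bad0 ∪ bad1 ∪ bad2) ≤ ENNReal.ofReal (1 * (γ ^ δ) ^ (-p)) := by
    calc P (bad0 ∪ bad1 ∪ bad2)
        ≤ P (bad0 ∪ bad1) + P bad2 := measure_union_le _ _
      _ ≤ (P bad0 + P bad1) + P bad2 := add_le_add_left (measure_union_le _ _) _
      _ ≤ (0 + ENNReal.ofReal t1) + ENNReal.ofReal t2 := by
          refine add_le_add (add_le_add hPbad0.le ?_) ?_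
          · rw [← hT1]; exact hPbad1
          · rw [← hT2]; exact hPbad2
      _ = ENNReal.ofReal t1 + ENNReal.ofReal t2 := by rw [zero_add]
      _ = ENNReal.ofReal (t1 + t2) := by
          rw [ENNReal.ofReal_add ht1nn ht2nn]
      _ ≤ ENNReal.ofReal (1 * (γ ^ δ) ^ (-p)) := by
          apply ENNReal.ofReal_le_ofReal
          rw [htarget]
          linarith
  -- conclude
  have hsub : (Set.univ : Set (Site d → ℝ)) ⊆ LocEvent γ (1/16) 1 Λ i S ∪ (bad0 ∪ bad1 ∪ bad2) := by
    intro v _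
    by_cases h0 : v ∈ bad0
    · exact Or.inr (Or.inl (Or.inl h0))
    by_cases h1 : v ∈ bad1
    · exact Or.inr (Or.inl (Or.inr h1))
    by_cases h2 : v ∈ bad2
    · exact Or.inr (Or.inr h2)
    exact Or.inl (hcover v h0 h1 h2)
  have hprob : IsProbabilityMeasure P := hP.1
  rw [tsub_le_iff_right]
  calc (1:ℝ≥0∞) = P Set.univ := hprob.measure_univ.symm
    _ ≤ P (LocEvent γ (1/16) 1 Λ i S ∪ (bad0 ∪ bad1 ∪ bad2)) := measure_mono hsub
    _ ≤ P (LocEvent γ (1/16) 1 Λ i S) + P (bad0 ∪ bad1 ∪ bad2) := measure_union_le _ _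
    _ ≤ P (LocEvent γ (1/16) 1 Λ i S) + ENNReal.ofReal (1 * (γ ^ δ) ^ (-p)) :=
        add_le_add_right hPbadtotal _
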